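/- Let f_k ∈ h^k ℂ[[h]] for k ≥ 1 be given, and set f(x) = 1 + Σ_{k≥1} f_k x^k (1 − x)^{−k} ∈ ℂ[[x, h]]. Then there exist unique elements g_k ∈ ℂ[[h]], k ≥ 0, such that f(x) / (1 − e^{−h}x) = Σ_{k≥0} g_k x^k (1 − x)^{−(k+1)} in ℂ[[x, h]]; moreover g_0 = 1 and g_k ∈ h^k ℂ[[h]] for all k ≥ 1. -/

import Mathlib

open PowerSeries Finset


set_option maxHeartbeats 2000000 in
/-- Work in `ℂ[[x,h]] = (ℂ[[h]])[[x]]`, with `x` the outer variable and `h` the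
inner one.  Given `f_k ∈ h^k ℂ[[h]]` for `k ≥ 1`, let
`f(x) = 1 + Σ_{k≥1} f_k x^k (1−x)^{−k}` (defined coefficientwise in `x`, each
coefficient being a finite sum).  Then there exist unique `g_k ∈ ℂ[[h]]` with
`f(x)/(1 − e^{−h}x) = Σ_{k≥0} g_k x^k (1−x)^{−(k+1)}` (again encoded
coefficientwise in `x`); moreover `g_0 = 1` and `g_k ∈ h^k ℂ[[h]]` for `k ≥ 1`. -/
theorem normalization_series_expansion
    (fk : ℕ → PowerSeries ℂ)
    (hfk : ∀ k : ℕ, 1 ≤ k → ∃ a : PowerSeries ℂ,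
      fk k = (PowerSeries.X : PowerSeries ℂ) ^ k * a) :
    let A := PowerSeries ℂ
    let invX : PowerSeries A := PowerSeries.invOfUnit (1 - PowerSeries.X) 1
    let eNegH : A := PowerSeries.rescale (-1) (PowerSeries.exp ℂ)
    let invE : PowerSeries A :=
      PowerSeries.invOfUnit (1 - PowerSeries.C (R := A) eNegH * PowerSeries.X) 1
    let F : PowerSeries A := PowerSeries.mk fun n =>
      (if n = 0 then (1 : A) else 0) +
        ∑ k ∈ Finset.Icc 1 n, fk k *
          PowerSeries.coeff (R := A) n ((PowerSeries.X * invX) ^ k)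
    (∃! g : ℕ → A,
        ∀ n : ℕ, PowerSeries.coeff (R := A) n (F * invE) =
          ∑ k ∈ Finset.range (n + 1), g k *
            PowerSeries.coeff (R := A) n (PowerSeries.X ^ k * invX ^ (k + 1)))
    ∧ ∀ g : ℕ → A,
        (∀ n : ℕ, PowerSeries.coeff (R := A) n (F * invE) =
          ∑ k ∈ Finset.range (n + 1), g k *
            PowerSeries.coeff (R := A) n (PowerSeries.X ^ k * invX ^ (k + 1))) →
        g 0 = 1 ∧ ∀ k : ℕ, 1 ≤ k → ∃ a : A,
          g k = (PowerSeries.X : PowerSeries ℂ) ^ k * a := by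
  intro A invX eNegH invE F
  -- basic facts
  have hcc_e : PowerSeries.constantCoeff (R := ℂ) eNegH = 1 := by
    show PowerSeries.constantCoeff (R := ℂ) (PowerSeries.rescale (-1) (PowerSeries.exp ℂ)) = 1
    rw [← PowerSeries.coeff_zero_eq_constantCoeff, PowerSeries.coeff_rescale]
    simp [PowerSeries.coeff_zero_eq_constantCoeff, PowerSeries.constantCoeff_exp]
  set u : A := eNegH - 1 with hu_def
  have hXu : (PowerSeries.X : A) ∣ u := by
    rw [PowerSeries.X_dvd_iff, map_sub, hcc_e, map_one, sub_self]
  -- (1 - X) * invX = 1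
  have hinvX : ((1 : PowerSeries A) - PowerSeries.X) * invX = 1 := by
    apply PowerSeries.mul_invOfUnit
    simp
  have hccinvX : PowerSeries.constantCoeff (R := A) invX = 1 := by
    have := congrArg (PowerSeries.constantCoeff (R := A)) hinvX
    simpa using this
  have hinvE : ((1 : PowerSeries A) - PowerSeries.C (R := A) eNegH * PowerSeries.X) * invE = 1 := by
    apply PowerSeries.mul_invOfUnit
    simp
  set Y : PowerSeries A := PowerSeries.X * invX with hY_def
  set w : PowerSeries A := PowerSeries.C (R := A) u * Y with hw_def
  have hXw : (PowerSeries.X : PowerSeries A) ∣ w := ⟨PowerSeries.C (R := A) u * invX, by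
    rw [hw_def, hY_def]; ring⟩
  have hccw : PowerSeries.constantCoeff (R := A) w = 0 := by
    obtain ⟨c, hc⟩ := hXw
    rw [hc, map_mul, PowerSeries.constantCoeff_X, zero_mul]
  set V : PowerSeries A := PowerSeries.invOfUnit (1 - w) 1 with hV_def
  have hV : ((1 : PowerSeries A) - w) * V = 1 := by
    apply PowerSeries.mul_invOfUnit
    simp [hccw]
  -- factorization
  have factor : (1 : PowerSeries A) - PowerSeries.C (R := A) eNegH * PowerSeries.X
      = (1 - PowerSeries.X) * (1 - w) := by
    have h1 : ((1 : PowerSeries A) - PowerSeries.X) * (1 - w)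
        = 1 - PowerSeries.X - PowerSeries.C (R := A) u * PowerSeries.X
            * ((1 - PowerSeries.X) * invX) := by
      rw [hw_def, hY_def]; ring
    rw [h1, hinvX, mul_one]
    have : PowerSeries.C (R := A) eNegH = 1 + PowerSeries.C (R := A) u := by
      rw [hu_def, map_sub, map_one]; ring
    rw [this]; ring
  have hinvE_eq : invE = invX * V := by
    have h2 : ((1 : PowerSeries A) - PowerSeries.C (R := A) eNegH * PowerSeries.X)
        * (invX * V) = 1 := by
      rw [factor]
      calc (1 - PowerSeries.X) * (1 - w) * (invX * V)
          = ((1 - PowerSeries.X) * invX) * ((1 - w) * V) := by ring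
        _ = 1 := by rw [hinvX, hV, mul_one]
    calc invE = invE * (((1 : PowerSeries A) - PowerSeries.C (R := A) eNegH * PowerSeries.X)
          * (invX * V)) := by rw [h2, mul_one]
      _ = (((1 : PowerSeries A) - PowerSeries.C (R := A) eNegH * PowerSeries.X) * invE)
          * (invX * V) := by ring
      _ = invX * V := by rw [hinvE, one_mul]
  -- closed form
  set F' : ℕ → A := fun j => if j = 0 then 1 else fk j with hF'_def
  set g : ℕ → A := fun k => ∑ j ∈ Finset.range (k + 1), F' j * u ^ (k - j) with hg_def
  have hXdvdYpow : ∀ k : ℕ, (PowerSeries.X : PowerSeries A) ^ k ∣ Y ^ k := by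
    intro k
    exact ⟨invX ^ k, by rw [hY_def, mul_pow]⟩
  -- diagonal coefficients
  have dnn : ∀ n : ℕ, PowerSeries.coeff (R := A) n (PowerSeries.X ^ n * invX ^ (n + 1)) = 1 := by
    intro n
    have : PowerSeries.coeff (R := A) (0 + n) (PowerSeries.X ^ n * invX ^ (n + 1))
        = PowerSeries.coeff (R := A) 0 (invX ^ (n + 1)) := PowerSeries.coeff_X_pow_mul _ _ _
    rw [zero_add] at this
    rw [this, PowerSeries.coeff_zero_eq_constantCoeff, map_pow, hccinvX, one_pow]
  have dzero : ∀ n k : ℕ, n < k →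
      PowerSeries.coeff (R := A) n (PowerSeries.X ^ k * invX ^ (k + 1)) = 0 := by
    intro n k hnk
    exact PowerSeries.X_pow_dvd_iff.1 ⟨invX ^ (k + 1), rfl⟩ n hnk
  -- the key coefficient identity for the closed-form g
  have key : ∀ n : ℕ, PowerSeries.coeff (R := A) n (F * invE) =
      ∑ k ∈ Finset.range (n + 1), g k *
        PowerSeries.coeff (R := A) n (PowerSeries.X ^ k * invX ^ (k + 1)) := by
    intro n
    set N := n + 1 with hN
    set Fn : PowerSeries A := ∑ j ∈ Finset.range N, PowerSeries.C (R := A) (F' j) * Y ^ j with hFn_def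
    set Vn : PowerSeries A := ∑ m ∈ Finset.range N, w ^ m with hVn_def
    -- F ≡ Fn mod X^N
    have hF : (PowerSeries.X : PowerSeries A) ^ N ∣ F - Fn := by
      rw [PowerSeries.X_pow_dvd_iff]
      intro m hm
      rw [map_sub, sub_eq_zero]
      have hFm : PowerSeries.coeff (R := A) m F =
          (if m = 0 then (1 : A) else 0) +
            ∑ k ∈ Finset.Icc 1 m, fk k * PowerSeries.coeff (R := A) m (Y ^ k) := by
        show PowerSeries.coeff (R := A) m (PowerSeries.mk _) = _
        rw [PowerSeries.coeff_mk]
      have hrange : Finset.range N = insert 0 (Finset.Icc 1 n) := by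
        ext j; simp [Finset.mem_range, Finset.mem_Icc, Finset.mem_insert]; omega
      have hFnm : PowerSeries.coeff (R := A) m Fn =
          (if m = 0 then (1 : A) else 0) +
            ∑ k ∈ Finset.Icc 1 n, fk k * PowerSeries.coeff (R := A) m (Y ^ k) := by
        rw [hFn_def, map_sum, hrange, Finset.sum_insert (by simp)]
        congr 1
        · simp [PowerSeries.coeff_C_mul, hF'_def, PowerSeries.coeff_one]
        · apply Finset.sum_congr rfl
          intro j hj
          rw [Finset.mem_Icc] at hj
          rw [PowerSeries.coeff_C_mul, hF'_def]
          simp [Nat.one_le_iff_ne_zero.mp hj.1]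
      rw [hFm, hFnm]
      congr 1
      apply Finset.sum_subset
      · intro j hj; rw [Finset.mem_Icc] at *; omega
      · intro j hj hj'
        rw [Finset.mem_Icc] at hj hj'
        have : m < j := by omega
        rw [PowerSeries.X_pow_dvd_iff.1 (hXdvdYpow j) m this, mul_zero]
    -- V ≡ Vn mod X^N
    have hVdiff : (PowerSeries.X : PowerSeries A) ^ N ∣ V - Vn := by
      have tel : ((1 : PowerSeries A) - w) * Vn = 1 - w ^ N := by
        have := geom_sum_mul w N
        rw [hVn_def]
        linear_combination -this
      have : Vn = V - w ^ N * V := by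
        calc Vn = (((1 : PowerSeries A) - w) * V) * Vn := by rw [hV, one_mul]
          _ = (((1 : PowerSeries A) - w) * Vn) * V := by ring
          _ = (1 - w ^ N) * V := by rw [tel]
          _ = V - w ^ N * V := by ring
      rw [this]
      have : V - (V - w ^ N * V) = w ^ N * V := by ring
      rw [this]
      exact Dvd.dvd.mul_right (pow_dvd_pow_of_dvd hXw N) V
    -- Fn * Vn ≡ Σ C (g k) Y^k mod X^N
    have hprod : (PowerSeries.X : PowerSeries A) ^ N ∣
        Fn * Vn - ∑ k ∈ Finset.range N, PowerSeries.C (R := A) (g k) * Y ^ k := by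
      set a : ℕ → PowerSeries A := fun j => PowerSeries.C (R := A) (F' j) * Y ^ j with ha_def
      have hterm : ∀ k ∈ Finset.range N, PowerSeries.C (R := A) (g k) * Y ^ k
          = ∑ j ∈ Finset.range (k + 1), a j * w ^ (k - j) := by
        intro k _
        rw [hg_def, map_sum, Finset.sum_mul]
        apply Finset.sum_congr rfl
        intro j hj
        rw [Finset.mem_range] at hj
        have hjk : Y ^ j * Y ^ (k - j) = Y ^ k := by
          rw [← pow_add]; congr 1; omega
        simp only [ha_def]
        rw [map_mul, map_pow, hw_def, ← hjk]
        ring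
      rw [Finset.sum_congr rfl hterm]
      have flip : ∑ k ∈ Finset.range N, ∑ j ∈ Finset.range (k + 1), a j * w ^ (k - j)
          = ∑ j ∈ Finset.range N, a j * ∑ m ∈ Finset.range (N - j), w ^ m := by
        rw [Finset.sum_range_diag_flip N (fun j m => a j * w ^ m)]
        apply Finset.sum_congr rfl
        intro j _
        rw [Finset.mul_sum]
      rw [flip]
      have hFnVn : Fn * Vn = ∑ j ∈ Finset.range N, a j * Vn := by
        rw [hFn_def, Finset.sum_mul]
      rw [hFnVn, ← Finset.sum_sub_distrib]
      apply Finset.dvd_sum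
      intro j hj
      rw [Finset.mem_range] at hj
      have hsub : a j * Vn - a j * ∑ m ∈ Finset.range (N - j), w ^ m
          = a j * ∑ m ∈ Finset.Ico (N - j) N, w ^ m := by
        rw [Finset.sum_Ico_eq_sub _ (Nat.sub_le N j), mul_sub, hVn_def]
      rw [hsub, Finset.mul_sum]
      apply Finset.dvd_sum
      intro m hm
      rw [Finset.mem_Ico] at hm
      have h1 : (PowerSeries.X : PowerSeries A) ^ j ∣ a j :=
        Dvd.dvd.mul_left (hXdvdYpow j) _
      have h2 : (PowerSeries.X : PowerSeries A) ^ (N - j) ∣ w ^ m :=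
        dvd_trans (pow_dvd_pow_of_dvd hXw (N - j)) (pow_dvd_pow w hm.1)
      have : (PowerSeries.X : PowerSeries A) ^ N
          = PowerSeries.X ^ j * PowerSeries.X ^ (N - j) := by
        rw [← pow_add]
        congr 1
        omega
      rw [this]
      exact mul_dvd_mul h1 h2
    -- assemble
    have main : (PowerSeries.X : PowerSeries A) ^ N ∣
        F * invE - ∑ k ∈ Finset.range N,
          PowerSeries.C (R := A) (g k) * (PowerSeries.X ^ k * invX ^ (k + 1)) := by
      have hYk : ∀ k : ℕ, Y ^ k * invX = PowerSeries.X ^ k * invX ^ (k + 1) := by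
        intro k
        rw [hY_def, mul_pow, pow_succ]
        ring
      have hsum : ∑ k ∈ Finset.range N,
            PowerSeries.C (R := A) (g k) * (PowerSeries.X ^ k * invX ^ (k + 1))
          = (∑ k ∈ Finset.range N, PowerSeries.C (R := A) (g k) * Y ^ k) * invX := by
        rw [Finset.sum_mul]
        apply Finset.sum_congr rfl
        intro k _
        rw [mul_assoc, hYk]
      rw [hsum, hinvE_eq]
      have hdecomp : F * (invX * V)
            - (∑ k ∈ Finset.range N, PowerSeries.C (R := A) (g k) * Y ^ k) * invX
          = ((F - Fn) * V + Fn * (V - Vn)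
              + (Fn * Vn - ∑ k ∈ Finset.range N, PowerSeries.C (R := A) (g k) * Y ^ k)) * invX := by
        ring
      rw [hdecomp]
      apply Dvd.dvd.mul_right
      exact dvd_add (dvd_add (hF.mul_right V) ((hVdiff).mul_left Fn)) hprod
    have hzero : PowerSeries.coeff (R := A) n
        (F * invE - ∑ k ∈ Finset.range N,
          PowerSeries.C (R := A) (g k) * (PowerSeries.X ^ k * invX ^ (k + 1))) = 0 :=
      PowerSeries.X_pow_dvd_iff.1 main n (by omega)
    rw [map_sub, sub_eq_zero] at hzero
    rw [hzero, map_sum]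
    apply Finset.sum_congr rfl
    intro k _
    rw [PowerSeries.coeff_C_mul]
  -- uniqueness of solutions
  have uniq : ∀ g1 g2 : ℕ → A,
      (∀ n : ℕ, PowerSeries.coeff (R := A) n (F * invE) =
        ∑ k ∈ Finset.range (n + 1), g1 k *
          PowerSeries.coeff (R := A) n (PowerSeries.X ^ k * invX ^ (k + 1))) →
      (∀ n : ℕ, PowerSeries.coeff (R := A) n (F * invE) =
        ∑ k ∈ Finset.range (n + 1), g2 k *
          PowerSeries.coeff (R := A) n (PowerSeries.X ^ k * invX ^ (k + 1))) →
      ∀ n, g1 n = g2 n := by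
    intro g1 g2 h1 h2 n
    induction n using Nat.strong_induction_on with
    | _ n ih =>
      have e12 : ∑ k ∈ Finset.range (n + 1), g1 k *
            PowerSeries.coeff (R := A) n (PowerSeries.X ^ k * invX ^ (k + 1))
          = ∑ k ∈ Finset.range (n + 1), g2 k *
            PowerSeries.coeff (R := A) n (PowerSeries.X ^ k * invX ^ (k + 1)) := by
        rw [← h1 n, ← h2 n]
      rw [Finset.sum_range_succ, Finset.sum_range_succ] at e12
      have hsums : ∑ k ∈ Finset.range n, g1 k *
            PowerSeries.coeff (R := A) n (PowerSeries.X ^ k * invX ^ (k + 1))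
          = ∑ k ∈ Finset.range n, g2 k *
            PowerSeries.coeff (R := A) n (PowerSeries.X ^ k * invX ^ (k + 1)) := by
        apply Finset.sum_congr rfl
        intro k hk
        rw [ih k (Finset.mem_range.1 hk)]
      rw [hsums, dnn n, mul_one, mul_one] at e12
      exact add_left_cancel e12
  have hg0 : g 0 = 1 := by
    rw [hg_def]
    simp [hF'_def]
  have hgdvd : ∀ k : ℕ, 1 ≤ k → ∃ a : A, g k = (PowerSeries.X : PowerSeries ℂ) ^ k * a := by
    intro k hk
    have : (PowerSeries.X : A) ^ k ∣ g k := by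
      rw [hg_def]
      apply Finset.dvd_sum
      intro j hj
      rw [Finset.mem_range] at hj
      by_cases hj0 : j = 0
      · subst hj0
        have h0 : F' 0 * u ^ (k - 0) = u ^ k := by simp [hF'_def]
        rw [h0]
        exact pow_dvd_pow_of_dvd hXu k
      · obtain ⟨b, hb⟩ := hfk j (Nat.one_le_iff_ne_zero.mpr hj0)
        have h1 : (PowerSeries.X : A) ^ j ∣ F' j := by
          rw [hF'_def]
          simp only [if_neg hj0]
          exact ⟨b, hb⟩
        have h2 : (PowerSeries.X : A) ^ (k - j) ∣ u ^ (k - j) :=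
          pow_dvd_pow_of_dvd hXu (k - j)
        have : (PowerSeries.X : A) ^ k = PowerSeries.X ^ j * PowerSeries.X ^ (k - j) := by
          rw [← pow_add]; congr 1; omega
        rw [this]
        exact mul_dvd_mul h1 h2
    obtain ⟨a, ha⟩ := this
    exact ⟨a, ha⟩
  constructor
  · exact ⟨g, key, fun y hy => funext fun n => uniq y g hy key n⟩
  · intro g' hg'
    have hgg : ∀ n, g' n = g n := uniq g' g hg' key
    constructor
    · rw [hgg 0, hg0]
    · intro k hk
      rw [hgg k]
      exact hgdvd k hk
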